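/- Let A be a unital C*-algebra, M ≥ 1, and let a₁,…,a_n ∈ A be self-adjoint elements with ‖a_i‖ ≤ M such that a_ia_j = a_ja_i for all 1 ≤ i,j ≤ n. Then for every 0 < η < 1 the joint spectrum Sp((a₁,…,a_n)) is contained in the η-synthetic spectrum sSp^η((a₁,…,a_n)). -/

import Mathlib

open scoped ComplexOrder

noncomputable def theta (lam eta : ℝ) : ℝ → ℝ :=
  fun t => max 0 (min 1 ((eta - |t - lam|) / (eta / 4)))

/-- `Θ_{ξ,η}(a₁,…,a_n)`: ordered product of `θ_{ξᵢ,η}(aᵢ)` (continuous functional calculus). -/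
noncomputable def ThetaProd {A : Type*} [CStarAlgebra A] {n : ℕ}
    (xi : Fin n → ℝ) (eta : ℝ) (a : Fin n → A) : A :=
  (List.ofFn (fun i => cfc (theta (xi i) eta) (a i))).prod

/-- The grid size `k`: the smallest positive integer with `(M+1)/k < η/(2√n)`. -/
noncomputable def gridSize (n : ℕ) (M eta : ℝ) : ℕ :=
  sInf {k : ℕ | 0 < k ∧ (M + 1) / (k : ℝ) < eta / (2 * Real.sqrt n)}

/-- The grid `D^η ⊆ ℝⁿ`. -/
def grid (n : ℕ) (M eta : ℝ) : Set (EuclideanSpace ℝ (Fin n)) :=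
  {x | ∃ m : Fin n → ℤ, (∀ i, x i = (m i : ℝ) / (gridSize n M eta)) ∧
        ∀ i, |(m i : ℝ)| ≤ M * (gridSize n M eta)}

/-- The `η`-synthetic spectrum of an `n`-tuple of self-adjoint elements. -/
noncomputable def sSp {A : Type*} [CStarAlgebra A] (n : ℕ) (M eta : ℝ)
    (a : Fin n → A) : Set (EuclideanSpace ℝ (Fin n)) :=
  ⋃ x ∈ {x ∈ grid n M eta | 1 - eta ≤ ‖ThetaProd x eta a‖}, Metric.closedBall x eta

noncomputable def expVal {H : Type*} [NormedAddCommGroup H] [InnerProductSpace ℂ H]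
    (T : H →L[ℂ] H) (v : H) : ℝ :=
  RCLike.re (inner ℂ (T v) v : ℂ)

noncomputable def sd {H : Type*} [NormedAddCommGroup H] [InnerProductSpace ℂ H]
    (T : H →L[ℂ] H) (v : H) : ℝ :=
  ‖T v - expVal T v • v‖


/-- The unital C*-subalgebra generated by `1, b₁, …, b_n`. -/
noncomputable def genCStarSubalgebra {A : Type*} [CStarAlgebra A] {n : ℕ} (b : Fin n → A) :
    StarSubalgebra ℂ A :=
  (StarAlgebra.adjoin ℂ (Set.range b)).topologicalClosure

theorem mem_genCStarSubalgebra {A : Type*} [CStarAlgebra A] {n : ℕ} (b : Fin n → A) (i : Fin n) :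
    b i ∈ genCStarSubalgebra b :=
  (StarAlgebra.adjoin ℂ (Set.range b)).le_topologicalClosure
    (StarAlgebra.subset_adjoin ℂ _ ⟨i, rfl⟩)

/-- The joint spectrum of a commuting tuple of self-adjoint elements: the set of
`(χ(b₁),…,χ(b_n))` as `χ` ranges over the characters of the unital C*-subalgebra generated by
`1, b₁, …, b_n`. -/
noncomputable def jointSpectrum {A : Type*} [CStarAlgebra A] {n : ℕ} (b : Fin n → A) :
    Set (EuclideanSpace ℝ (Fin n)) :=
  {lam | ∃ χ ∈ WeakDual.characterSpace ℂ (genCStarSubalgebra b),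
      ∀ i, χ (⟨b i, mem_genCStarSubalgebra b i⟩ : genCStarSubalgebra b) = (lam i : ℂ)}



lemma theta_continuous (lam eta : ℝ) : Continuous (theta lam eta) := by
  unfold theta; fun_prop

lemma theta_apply_eq_one {lam eta t : ℝ} (hη : 0 < eta) (h : |t - lam| ≤ 3 * eta / 4) :
    theta lam eta t = 1 := by
  have h4 : (0:ℝ) < eta / 4 := by linarith
  have : (1:ℝ) ≤ (eta - |t - lam|) / (eta / 4) := (le_div_iff₀ h4).mpr (by linarith)
  simp [theta, min_eq_left, this, max_eq_right]

lemma isSelfAdjoint_ofReal (r : ℝ) : IsSelfAdjoint ((r : ℂ)) := by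
  rw [IsSelfAdjoint, Complex.star_def, Complex.conj_ofReal]

lemma cfc_ofReal (f : ℝ → ℝ) (hf : Continuous f) (r : ℝ) :
    cfc f ((r : ℂ)) = ((f r : ℝ) : ℂ) := by
  have hsa : IsSelfAdjoint ((r : ℂ)) := isSelfAdjoint_ofReal r
  have halg : ((r : ℂ)) = algebraMap ℝ ℂ r := rfl
  have hspec : spectrum ℝ (cfc f ((r : ℂ))) ⊆ {f r} := by
    rw [cfc_map_spectrum (f := f) (a := ((r:ℂ))) hsa hf.continuousOn]
    have := CFC.spectrum_algebraMap_subset (R := ℝ) (A := ℂ) r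
    rw [← halg] at this
    rintro z ⟨y, hy, rfl⟩
    have : y = r := this hy
    simp [this]
  simpa using CFC.eq_algebraMap_of_spectrum_subset_singleton (R := ℝ)
    (cfc f ((r:ℂ))) (f r) hspec (cfc_predicate f _)

section Sub
variable {A : Type*} [CStarAlgebra A] (S : StarSubalgebra ℂ A) [IsClosed (S : Set A)]

lemma coe_cfc_sub (x : S) (hx : IsSelfAdjoint x) (f : ℝ → ℝ) (hf : Continuous f) :
    ((cfc f x : S) : A) = cfc f (x : A) := by
  have hx' : IsSelfAdjoint (x : A) := congrArg Subtype.val hx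
  simpa using StarAlgHom.map_cfc (S := ℂ) (R := ℝ) S.subtype f x
    hf.continuousOn continuous_subtype_val hx hx'

lemma char_cfc_sub (χ : WeakDual.characterSpace ℂ S) (x : S) (hx : IsSelfAdjoint x)
    (f : ℝ → ℝ) (hf : Continuous f) (lam : ℝ) (hlam : χ x = (lam : ℂ)) :
    χ (cfc f x) = ((f lam : ℝ) : ℂ) := by
  have hsa : IsSelfAdjoint (χ x) := by rw [hlam]; exact isSelfAdjoint_ofReal lam
  have := StarAlgHomClass.map_cfc (R := ℝ) (S := ℂ) χ f x
    hf.continuousOn (map_continuous χ) hx hsa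
  rw [this, hlam, cfc_ofReal f hf lam]

end Sub


theorem stmt11 {A : Type*} [CStarAlgebra A] {n : ℕ} (M : ℝ) (hM : 1 ≤ M)
    (a : Fin n → A) (hsa : ∀ i, IsSelfAdjoint (a i)) (hnorm : ∀ i, ‖a i‖ ≤ M)
    (hcomm : ∀ i j, a i * a j = a j * a i) (η : ℝ) (hη : 0 < η) (hη1 : η < 1) :
    jointSpectrum a ⊆ sSp n M η a := by
  rintro lam ⟨χ, hχmem, hχ⟩
  haveI hSclosed : IsClosed ((genCStarSubalgebra a : StarSubalgebra ℂ A) : Set A) :=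
    StarSubalgebra.isClosed_topologicalClosure _
  let b : Fin n → (genCStarSubalgebra a) := fun i => ⟨a i, mem_genCStarSubalgebra a i⟩
  have hbsa : ∀ i, IsSelfAdjoint (b i) := fun i => Subtype.ext (hsa i)
  let χ' : WeakDual.characterSpace ℂ (genCStarSubalgebra a) := ⟨χ, hχmem⟩
  have hχ'b : ∀ i, χ' (b i) = (lam i : ℂ) := hχ
  haveI : Nontrivial (genCStarSubalgebra a) := by
    refine nontrivial_of_ne 1 0 fun h => ?_
    have h1 : χ' (1 : genCStarSubalgebra a) = 1 := map_one χ'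
    rw [h, map_zero] at h1
    exact one_ne_zero h1.symm
  -- bound on lam
  have hlam_le : ∀ i, |lam i| ≤ M := by
    intro i
    have h3 : χ' (b i) ∈ spectrum ℂ (b i) :=
      WeakDual.CharacterSpace.apply_mem_spectrum χ' (b i)
    have h4 : ‖χ' (b i)‖ ≤ ‖b i‖ := spectrum.norm_le_norm_of_mem h3
    rw [hχ'b i] at h4
    have h5 : ‖b i‖ = ‖a i‖ := rfl
    rw [Complex.norm_real] at h4
    exact h4.trans (h5.le.trans (hnorm i))
  -- the key norm estimate
  have key : ∀ x : EuclideanSpace ℝ (Fin n), (∀ i, |lam i - x i| ≤ 3 * η / 4) →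
      1 - η ≤ ‖ThetaProd x η a‖ := by
    intro x hx
    set g : Fin n → (genCStarSubalgebra a) := fun i => cfc (theta (x i) η) (b i) with hg
    have hcoe : ((List.ofFn g).prod : A) = ThetaProd x η a := by
      have h0 : ((List.ofFn g).prod : A) = (genCStarSubalgebra a).subtype (List.ofFn g).prod := rfl
      rw [h0, map_list_prod, List.map_ofFn]
      unfold ThetaProd
      have hfg : (⇑(genCStarSubalgebra a).subtype ∘ g) = fun i => cfc (theta (x i) η) (a i) := by
        funext i
        exact coe_cfc_sub (genCStarSubalgebra a) (b i) (hbsa i) _ (theta_continuous _ _)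
      rw [hfg]
    have hval : χ' (List.ofFn g).prod = 1 := by
      rw [map_list_prod, List.map_ofFn]
      have heach : ∀ i, (⇑χ' ∘ g) i = 1 := by
        intro i
        have := char_cfc_sub (genCStarSubalgebra a) χ' (b i) (hbsa i) (theta (x i) η)
          (theta_continuous _ _) (lam i) (hχ'b i)
        rw [Function.comp_apply, hg, this,
          theta_apply_eq_one hη (by simpa [abs_sub_comm] using hx i)]
        simp
      rw [funext heach]
      simp
    have hnorm1 : (1:ℝ) ≤ ‖(List.ofFn g).prod‖ := by
      have hmem : χ' (List.ofFn g).prod ∈ spectrum ℂ (List.ofFn g).prod :=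
        WeakDual.CharacterSpace.apply_mem_spectrum χ' _
      have := spectrum.norm_le_norm_of_mem hmem
      rw [hval] at this
      simpa using this
    have hne : ‖ThetaProd x η a‖ = ‖(List.ofFn g).prod‖ := by
      rw [← hcoe]; rfl
    rw [hne]; linarith
  rcases Nat.eq_zero_or_pos n with hn | hn
  · subst hn
    refine Set.mem_iUnion₂.mpr ⟨lam, ⟨⟨fun i => i.elim0, fun i => i.elim0, fun i => i.elim0⟩,
      key lam (fun i => i.elim0)⟩, ?_⟩
    simpa using hη.le
  · -- main case : n ≥ 1
    have hnR : (1:ℝ) ≤ (n : ℝ) := by exact_mod_cast hn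
    have hs1 : (1:ℝ) ≤ Real.sqrt n := by
      rw [show (1:ℝ) = Real.sqrt 1 by simp]
      exact Real.sqrt_le_sqrt hnR
    have hs0 : (0:ℝ) < Real.sqrt n := by linarith
    -- grid size facts
    have hne : {k : ℕ | 0 < k ∧ (M + 1) / (k : ℝ) < η / (2 * Real.sqrt n)}.Nonempty := by
      obtain ⟨K, hK⟩ := exists_nat_gt ((M + 1) * (2 * Real.sqrt n) / η)
      have hpos : (0:ℝ) < (M + 1) * (2 * Real.sqrt n) / η := by positivity
      have hKpos : 0 < K := by exact_mod_cast hpos.trans hK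
      refine ⟨K, hKpos, ?_⟩
      have hKR : (0:ℝ) < K := by exact_mod_cast hKpos
      rw [div_lt_div_iff₀ hKR (by positivity)]
      have := (div_lt_iff₀ hη).mp hK
      linarith
    set k : ℕ := gridSize n M η with hkdef
    obtain ⟨hkpos, hklt⟩ : 0 < k ∧ (M + 1) / (k : ℝ) < η / (2 * Real.sqrt n) :=
      Nat.sInf_mem hne
    have hkR : (0:ℝ) < (k : ℝ) := by exact_mod_cast hkpos
    have h1k : 1 / (k:ℝ) ≤ η / (4 * Real.sqrt n) := by
      rw [div_lt_div_iff₀ hkR (by positivity)] at hklt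
      rw [div_le_div_iff₀ hkR (by positivity)]
      nlinarith
    have h1k4 : 1 / (k:ℝ) ≤ η / 4 := by
      refine h1k.trans ?_
      apply div_le_div_of_nonneg_left hη.le (by linarith)
      nlinarith
    -- choice of the integers m i
    have hm : ∀ i, ∃ m : ℤ, |(m:ℝ) - (k:ℝ) * lam i| ≤ 1 ∧ |(m:ℝ)| ≤ M * k := by
      intro i
      have hlami : |lam i| ≤ M := hlam_le i
      rcases le_or_gt 0 (lam i) with h | h
      · refine ⟨⌊(k:ℝ) * lam i⌋, ?_, ?_⟩
        · rw [abs_le]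
          constructor
          · linarith [Int.lt_floor_add_one ((k:ℝ) * lam i)]
          · linarith [Int.floor_le ((k:ℝ) * lam i)]
        · have h0 : (0:ℝ) ≤ (⌊(k:ℝ) * lam i⌋ : ℝ) := by
            exact_mod_cast Int.floor_nonneg.mpr (by positivity)
          rw [abs_of_nonneg h0]
          calc ((⌊(k:ℝ) * lam i⌋ : ℤ) : ℝ) ≤ (k:ℝ) * lam i := Int.floor_le _
            _ ≤ (k:ℝ) * M := by
                have : lam i ≤ M := le_trans (le_abs_self _) hlami
                nlinarith
            _ = M * k := mul_comm _ _
      · refine ⟨⌈(k:ℝ) * lam i⌉, ?_, ?_⟩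
        · rw [abs_le]
          constructor
          · linarith [Int.le_ceil ((k:ℝ) * lam i)]
          · linarith [Int.ceil_lt_add_one ((k:ℝ) * lam i)]
        · have h0' : ⌈(k:ℝ) * lam i⌉ ≤ (0:ℤ) := Int.ceil_le.mpr (by push_cast; nlinarith)
          have h0 : ((⌈(k:ℝ) * lam i⌉ : ℤ) : ℝ) ≤ 0 := by exact_mod_cast h0'
          rw [abs_of_nonpos h0]
          have : -M ≤ lam i := neg_le_of_abs_le hlami
          calc -((⌈(k:ℝ) * lam i⌉ : ℤ) : ℝ) ≤ -((k:ℝ) * lam i) := by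
                have := Int.le_ceil ((k:ℝ) * lam i); linarith
            _ ≤ M * k := by nlinarith
    choose m hm1 hm2 using hm
    let x : EuclideanSpace ℝ (Fin n) := WithLp.toLp 2 (fun i => (m i : ℝ) / (k : ℝ))
    have hxval : ∀ i, x i = (m i : ℝ) / (k : ℝ) := fun i => rfl
    have hclose : ∀ i, |lam i - x i| ≤ 1 / (k:ℝ) := by
      intro i
      have heq : lam i - x i = ((k:ℝ) * lam i - (m i : ℝ)) / k := by
        rw [hxval]; field_simp
      rw [heq, abs_div, abs_of_pos hkR]
      have : |(k:ℝ) * lam i - (m i : ℝ)| ≤ 1 := by rw [abs_sub_comm]; exact hm1 i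
      gcongr
    have hclose34 : ∀ i, |lam i - x i| ≤ 3 * η / 4 := fun i =>
      (hclose i).trans (h1k4.trans (by linarith))
    have hdist : dist lam x ≤ η := by
      rw [EuclideanSpace.dist_eq]
      have hsum : ∑ i, dist (lam i) (x i) ^ 2 ≤ (n : ℝ) * (1 / (k:ℝ)) ^ 2 := by
        calc ∑ i, dist (lam i) (x i) ^ 2 ≤ ∑ _i : Fin n, (1 / (k:ℝ)) ^ 2 := by
              refine Finset.sum_le_sum fun i _ => ?_
              rw [Real.dist_eq]
              exact pow_le_pow_left₀ (abs_nonneg _) (hclose i) 2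
          _ = (n : ℝ) * (1 / (k:ℝ)) ^ 2 := by
              simp [Finset.sum_const, mul_comm]
      calc Real.sqrt (∑ i, dist (lam i) (x i) ^ 2)
          ≤ Real.sqrt ((n:ℝ) * (1 / (k:ℝ)) ^ 2) := Real.sqrt_le_sqrt hsum
        _ = Real.sqrt n * (1 / (k:ℝ)) := by
            rw [Real.sqrt_mul (by positivity), Real.sqrt_sq (by positivity)]
        _ ≤ Real.sqrt n * (η / (4 * Real.sqrt n)) := by
            exact mul_le_mul_of_nonneg_left h1k hs0.le
        _ = η / 4 := by field_simp
        _ ≤ η := by linarith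
    refine Set.mem_iUnion₂.mpr ⟨x, ⟨⟨m, fun i => rfl, fun i => ?_⟩, key x hclose34⟩, ?_⟩
    · rw [← hkdef]; exact hm2 i
    · exact Metric.mem_closedBall.mpr hdist
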